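/- In a rooted non-metric tree with a point having uncountably many branches, the weak tree topology is strictly coarser than the metric topology induced by any parametrization Ψ: T → [1,∞]. -/
import Mathlib


variable {T : Type*} [PartialOrder T]

/-- The closed segment `[a,b] = {γ | a∧b ≤ γ ≤ a or a∧b ≤ γ ≤ b}`, where
`wedge a b` is the infimum `a∧b`. -/
def seg (wedge : T → T → T) (a b : T) : Set T :=
  {γ | (wedge a b ≤ γ ∧ γ ≤ a) ∨ (wedge a b ≤ γ ∧ γ ≤ b)}

/-- The half-open segment `]a,b] = [a,b] \ {a}`. -/
def segOC (wedge : T → T → T) (a b : T) : Set T :=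
  seg wedge a b \ {a}

/-- The tangent relation at `τ`: `a ~_τ b ↔ ]τ,a] ∩ ]τ,b] ≠ ∅`. -/
def tangRel (wedge : T → T → T) (τ a b : T) : Prop :=
  (segOC wedge τ a ∩ segOC wedge τ b).Nonempty

/-- The tangent-vector class `[σ]_τ` of `σ` at `τ`, a subset of `T \ {τ}`. -/
def tangClass (wedge : T → T → T) (τ σ : T) : Set T :=
  {α | α ≠ τ ∧ tangRel wedge τ σ α}

open ENNReal in
/-- The distance associated to a parametrization `Ψ : T → [1,∞]`:
`d_Ψ(a,b) = (1/Ψ(a∧b) − 1/Ψ(a)) + (1/Ψ(a∧b) − 1/Ψ(b))`. -/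
noncomputable def dPsi (wedge : T → T → T) (Ψ : T → ℝ≥0∞) (a b : T) : ℝ :=
  ((Ψ (wedge a b))⁻¹.toReal - (Ψ a)⁻¹.toReal) +
    ((Ψ (wedge a b))⁻¹.toReal - (Ψ b)⁻¹.toReal)

/-- The weak tree topology, generated by the tangent-vector classes. -/
def weakTreeTopology (wedge : T → T → T) : TopologicalSpace T :=
  TopologicalSpace.generateFrom {U | ∃ τ σ : T, σ ≠ τ ∧ U = tangClass wedge τ σ}

/-- The topology associated with the metric `d_Ψ`, generated by open balls. -/
noncomputable def dPsiTopology (wedge : T → T → T) (Ψ : T → ENNReal) :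
    TopologicalSpace T :=
  TopologicalSpace.generateFrom
    {B | ∃ (x : T) (ε : ℝ), 0 < ε ∧ B = {y | dPsi wedge Ψ x y < ε}}

section Aux

variable {wedge : T → T → T}

lemma wedge_le_left (hw : ∀ a b : T, IsGLB {a, b} (wedge a b)) (a b : T) : wedge a b ≤ a :=
  (hw a b).1 (by simp)

lemma wedge_le_right (hw : ∀ a b : T, IsGLB {a, b} (wedge a b)) (a b : T) : wedge a b ≤ b :=
  (hw a b).1 (by simp)

lemma le_wedge (hw : ∀ a b : T, IsGLB {a, b} (wedge a b)) {a b c : T}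
    (h1 : c ≤ a) (h2 : c ≤ b) : c ≤ wedge a b :=
  (hw a b).2 (by rintro x (rfl | rfl) <;> assumption)

lemma wedge_self (hw : ∀ a b : T, IsGLB {a, b} (wedge a b)) (a : T) : wedge a a = a :=
  le_antisymm (wedge_le_left hw a a) (le_wedge hw le_rfl le_rfl)

lemma wedge_eq_left (hw : ∀ a b : T, IsGLB {a, b} (wedge a b)) {a b : T} (h : a ≤ b) :
    wedge a b = a :=
  le_antisymm (wedge_le_left hw a b) (le_wedge hw le_rfl h)

lemma below_comp (hI : ∀ τ : T, ∃ s : Set ℝ, s.OrdConnected ∧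
      Nonempty ({σ : T // σ ≤ τ} ≃o s))
    {c x y : T} (hx : x ≤ c) (hy : y ≤ c) : x ≤ y ∨ y ≤ x := by
  obtain ⟨s, -, ⟨e⟩⟩ := hI c
  rcases le_total (e ⟨x, hx⟩) (e ⟨y, hy⟩) with h | h
  · exact Or.inl (Subtype.mk_le_mk.mp (e.le_iff_le.mp h))
  · exact Or.inr (Subtype.mk_le_mk.mp (e.le_iff_le.mp h))

noncomputable def fPsi (Ψ : T → ENNReal) (t : T) : ℝ := ((Ψ t)⁻¹).toReal

lemma fPsi_anti {Ψ : T → ENNReal} (hΨ1 : ∀ t, 1 ≤ Ψ t) (hmono : Monotone Ψ)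
    {a b : T} (h : a ≤ b) : fPsi Ψ b ≤ fPsi Ψ a :=
  ENNReal.toReal_mono (ENNReal.inv_ne_top.mpr (ne_of_gt (lt_of_lt_of_le zero_lt_one (hΨ1 a))))
    (ENNReal.inv_le_inv.mpr (hmono h))

lemma fPsi_strict {Ψ : T → ENNReal} (hΨ1 : ∀ t, 1 ≤ Ψ t)
    (hstrict : ∀ a b : T, a < b → Ψ a < Ψ b)
    {a b : T} (h : a < b) : fPsi Ψ b < fPsi Ψ a :=
  ENNReal.toReal_strict_mono
    (ENNReal.inv_ne_top.mpr (ne_of_gt (lt_of_lt_of_le zero_lt_one (hΨ1 a))))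
    (ENNReal.inv_lt_inv.mpr (hstrict a b h))

lemma dPsi_eq (Ψ : T → ENNReal) (a b : T) :
    dPsi wedge Ψ a b = (fPsi Ψ (wedge a b) - fPsi Ψ a) + (fPsi Ψ (wedge a b) - fPsi Ψ b) := rfl

lemma dPsi_self (hw : ∀ a b : T, IsGLB {a, b} (wedge a b)) (Ψ : T → ENNReal) (a : T) :
    dPsi wedge Ψ a a = 0 := by
  rw [dPsi_eq, wedge_self hw]; ring

lemma mem_tangClass_of_lt (hw : ∀ a b : T, IsGLB {a, b} (wedge a b)) {τ a b : T} (h : τ < a) :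
    b ∈ tangClass wedge τ a ↔ τ < wedge a b := by
  have hwa : wedge τ a = τ := wedge_eq_left hw h.le
  constructor
  · rintro ⟨hbτ, c, ⟨hsa, hna⟩, ⟨hsb, hnb⟩⟩
    have hcτ : c ≠ τ := hna
    rcases hsa with ⟨h1, h2⟩ | ⟨h1, h2⟩
    · exact absurd (le_antisymm h2 (hwa ▸ h1)) hcτ
    · have hτc : τ < c := lt_of_le_of_ne (hwa ▸ h1) (Ne.symm hcτ)
      rcases hsb with ⟨h3, h4⟩ | ⟨h3, h4⟩
      · exact absurd (le_antisymm h4 hτc.le) hcτ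
      · exact lt_of_lt_of_le hτc (le_wedge hw h2 h4)
  · intro h2
    have hne : wedge a b ≠ τ := fun hc => absurd (hc ▸ h2) (lt_irrefl τ)
    refine ⟨?_, wedge a b,
      ⟨Or.inr ⟨(wedge_le_left hw τ a).trans h2.le, wedge_le_left hw a b⟩, hne⟩,
      ⟨Or.inr ⟨(wedge_le_left hw τ b).trans h2.le, wedge_le_right hw a b⟩, hne⟩⟩
    exact fun hbeq => absurd (h2.trans_le ((wedge_le_right hw a b).trans hbeq.le)) (lt_irrefl τ)

lemma mem_tangClass_of_not_le (hw : ∀ a b : T, IsGLB {a, b} (wedge a b))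
    (hch : ∀ {c x y : T}, x ≤ c → y ≤ c → x ≤ y ∨ y ≤ x)
    {τ a b : T} (h : ¬ τ ≤ a) :
    b ∈ tangClass wedge τ a ↔ ¬ τ ≤ b := by
  constructor
  · rintro ⟨hbτ, c, ⟨hsa, hna⟩, ⟨hsb, hnb⟩⟩ hτb
    have hwb : wedge τ b = τ := wedge_eq_left hw hτb
    have hτc : τ ≤ c := by rcases hsb with ⟨h1, _⟩ | ⟨h1, _⟩ <;> exact hwb ▸ h1
    rcases hsa with ⟨h1, h2⟩ | ⟨h1, h2⟩
    · exact hna (le_antisymm h2 hτc)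
    · exact h (hτc.trans h2)
  · intro hτb
    have hb : b ≠ τ := fun hb => hτb (hb ▸ le_rfl)
    have hwa_le : wedge τ a ≤ τ := wedge_le_left hw τ a
    have hwb_le : wedge τ b ≤ τ := wedge_le_left hw τ b
    have hwa_ne : wedge τ a ≠ τ := fun hh => h (hh.symm.le.trans (wedge_le_right hw τ a))
    have hwb_ne : wedge τ b ≠ τ := fun hh => hτb (hh.symm.le.trans (wedge_le_right hw τ b))
    rcases hch hwa_le hwb_le with hcase | hcase
    · exact ⟨hb, wedge τ b, ⟨Or.inl ⟨hcase, hwb_le⟩, hwb_ne⟩,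
        ⟨Or.inl ⟨le_rfl, hwb_le⟩, hwb_ne⟩⟩
    · exact ⟨hb, wedge τ a, ⟨Or.inl ⟨le_rfl, hwa_le⟩, hwa_ne⟩,
        ⟨Or.inl ⟨hcase, hwa_le⟩, hwa_ne⟩⟩

lemma tangClass_self_empty (hw : ∀ a b : T, IsGLB {a, b} (wedge a b)) (τ : T) :
    tangClass wedge τ τ = ∅ := by
  apply Set.eq_empty_iff_forall_notMem.mpr
  rintro b ⟨hb, c, ⟨hs, hn⟩, -⟩
  have hww : wedge τ τ = τ := wedge_self hw τ
  rcases hs with ⟨h1, h2⟩ | ⟨h1, h2⟩ <;> exact hn (le_antisymm h2 (hww ▸ h1))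

lemma self_mem_tangClass (hw : ∀ a b : T, IsGLB {a, b} (wedge a b)) {τ α : T} (h : α ≠ τ) :
    α ∈ tangClass wedge τ α :=
  ⟨h, α, ⟨Or.inr ⟨wedge_le_right hw τ α, le_rfl⟩, h⟩,
    ⟨Or.inr ⟨wedge_le_right hw τ α, le_rfl⟩, h⟩⟩

lemma up_trans (hw : ∀ a b : T, IsGLB {a, b} (wedge a b))
    (hch : ∀ {c x y : T}, x ≤ c → y ≤ c → x ≤ y ∨ y ≤ x)
    {s b x β τc : T}
    (h1 : s < wedge β b) (h2 : s < wedge τc b) (h3 : s < wedge β x) : s < wedge τc x := by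
  have hub : wedge β b ≤ b := wedge_le_right hw β b
  have huβ : wedge β b ≤ β := wedge_le_left hw β b
  have hvb : wedge τc b ≤ b := wedge_le_right hw τc b
  have hvτ : wedge τc b ≤ τc := wedge_le_left hw τc b
  have hwβ : wedge β x ≤ β := wedge_le_left hw β x
  have hwx : wedge β x ≤ x := wedge_le_right hw β x
  have key : ∀ p : T, s < p → p ≤ τc → p ≤ x → s < wedge τc x :=
    fun p hp hp1 hp2 => lt_of_lt_of_le hp (le_wedge hw hp1 hp2)
  rcases hch hub hvb with huv | hvu
  · rcases hch huβ hwβ with huw | hwu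
    · exact key _ h1 (huv.trans hvτ) (huw.trans hwx)
    · exact key _ h3 ((hwu.trans huv).trans hvτ) hwx
  · rcases hch huβ hwβ with huw | hwu
    · exact key _ h2 hvτ ((hvu.trans huw).trans hwx)
    · rcases hch hvb (hwu.trans hub) with hvw | hwv
      · exact key _ h2 hvτ (hvw.trans hwx)
      · exact key _ h3 (hwv.trans hvτ) hwx

end Aux

section Aux2

variable {wedge : T → T → T}

lemma classes_subset (hw : ∀ a b : T, IsGLB {a, b} (wedge a b))
    (hch : ∀ {c x y : T}, x ≤ c → y ≤ c → x ≤ y ∨ y ≤ x)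
    {τ σ α : T} (hστ : σ ∈ tangClass wedge τ α)
    {β : T} (hβ : β ≠ σ) (hne : tangClass wedge σ β ≠ tangClass wedge σ τ) :
    tangClass wedge σ β ⊆ tangClass wedge τ α := by
  have hστ' : σ ≠ τ := hστ.1
  have hατ : α ≠ τ := by
    rintro rfl
    rw [tangClass_self_empty hw] at hστ
    exact hστ
  by_cases hτσ : τ ≤ σ
  · have hτσ' : τ < σ := lt_of_le_of_ne hτσ hστ'.symm
    have hτα : τ < α := by
      by_contra h'
      have hna : ¬ τ ≤ α := fun hh => h' (lt_of_le_of_ne hh (Ne.symm hατ))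
      exact (mem_tangClass_of_not_le hw hch hna).mp hστ hτσ
    have hw1 : τ < wedge α σ := (mem_tangClass_of_lt hw hτα).mp hστ
    by_cases hσβ : σ ≤ β
    · have hσβ' : σ < β := lt_of_le_of_ne hσβ (Ne.symm hβ)
      intro b hb
      have hb' : σ < wedge β b := (mem_tangClass_of_lt hw hσβ').mp hb
      have hσb : σ ≤ b := hb'.le.trans (wedge_le_right hw β b)
      exact (mem_tangClass_of_lt hw hτα).mpr
        (lt_of_lt_of_le hw1 (le_wedge hw (wedge_le_left hw α σ)
          ((wedge_le_right hw α σ).trans hσb)))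
    · exfalso
      apply hne
      ext x
      rw [mem_tangClass_of_not_le hw hch hσβ,
        mem_tangClass_of_not_le hw hch (fun hh => hστ' (le_antisymm hh hτσ))]
  · have hτα' : ¬ τ ≤ α := by
      intro hh
      have hlt : τ < α := lt_of_le_of_ne hh (Ne.symm hατ)
      have h2 := (mem_tangClass_of_lt hw hlt).mp hστ
      exact hτσ (h2.le.trans (wedge_le_right hw α σ))
    intro b hb
    rw [mem_tangClass_of_not_le hw hch hτα']
    intro hτb
    by_cases hστle : σ ≤ τ
    · have hστlt : σ < τ := lt_of_le_of_ne hστle hστ'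
      have hσb : σ < wedge τ b := by
        rw [wedge_eq_left hw hτb]; exact hστlt
      by_cases hσβ : σ ≤ β
      · have hσβ' : σ < β := lt_of_le_of_ne hσβ (Ne.symm hβ)
        have hb' : σ < wedge β b := (mem_tangClass_of_lt hw hσβ').mp hb
        apply hne
        ext x
        rw [mem_tangClass_of_lt hw hσβ', mem_tangClass_of_lt hw hστlt]
        exact ⟨fun h => up_trans hw hch hb' hσb h, fun h => up_trans hw hch hσb hb' h⟩
      · exact (mem_tangClass_of_not_le hw hch hσβ).mp hb (hστle.trans hτb)
    · by_cases hσβ : σ ≤ β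
      · have hσβ' : σ < β := lt_of_le_of_ne hσβ (Ne.symm hβ)
        have hb' : σ < wedge β b := (mem_tangClass_of_lt hw hσβ').mp hb
        have hσb : σ ≤ b := hb'.le.trans (wedge_le_right hw β b)
        rcases hch hσb hτb with h | h
        · exact hστle h
        · exact hτσ h
      · apply hne
        ext x
        rw [mem_tangClass_of_not_le hw hch hσβ, mem_tangClass_of_not_le hw hch hστle]

lemma weak_nbhd_cofinite (hw : ∀ a b : T, IsGLB {a, b} (wedge a b))
    (hch : ∀ {c x y : T}, x ≤ c → y ≤ c → x ≤ y ∨ y ≤ x)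
    (σ : T) {V : Set T}
    (hV : TopologicalSpace.GenerateOpen {U | ∃ τ α : T, α ≠ τ ∧ U = tangClass wedge τ α} V)
    (hσ : σ ∈ V) :
    {C : Set T | (∃ β : T, β ≠ σ ∧ C = tangClass wedge σ β) ∧ ¬ C ⊆ V}.Finite := by
  induction hV with
  | basic U hU =>
    obtain ⟨τ, α, hατ, rfl⟩ := hU
    apply Set.Finite.subset (Set.finite_singleton (tangClass wedge σ τ))
    rintro C ⟨⟨β, hβ, rfl⟩, hCn⟩
    by_contra hCτ
    exact hCn (classes_subset hw hch hσ hβ hCτ)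
  | univ =>
    apply Set.Finite.subset Set.finite_empty
    rintro C ⟨-, hC⟩
    exact absurd (Set.subset_univ C) hC
  | inter s t hs ht ihs iht =>
    apply Set.Finite.subset ((ihs hσ.1).union (iht hσ.2))
    rintro C ⟨hC1, hC2⟩
    by_cases h : C ⊆ s
    · exact Or.inr ⟨hC1, fun hh => hC2 (Set.subset_inter h hh)⟩
    · exact Or.inl ⟨hC1, h⟩
  | sUnion S hS ih =>
    obtain ⟨U, hU, hσU⟩ := hσ
    apply Set.Finite.subset (ih U hU hσU)
    rintro C ⟨hC1, hC2⟩
    exact ⟨hC1, fun hh => hC2 (hh.trans (Set.subset_sUnion_of_mem hU))⟩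

lemma gopen_of_balls (hw : ∀ a b : T, IsGLB {a, b} (wedge a b)) (Ψ : T → ENNReal) {S : Set T}
    (h : ∀ b ∈ S, ∃ ε : ℝ, 0 < ε ∧ {y | dPsi wedge Ψ b y < ε} ⊆ S) :
    TopologicalSpace.GenerateOpen
      {B | ∃ (x : T) (ε : ℝ), 0 < ε ∧ B = {y | dPsi wedge Ψ x y < ε}} S := by
  choose ε hε hsub using h
  have hS : S = ⋃₀ (Set.range (fun b : {b // b ∈ S} =>
      {y | dPsi wedge Ψ b.1 y < ε b.1 b.2})) := by
    ext y
    constructor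
    · intro hy
      refine ⟨_, ⟨⟨y, hy⟩, rfl⟩, ?_⟩
      show dPsi wedge Ψ y y < _
      rw [dPsi_self hw]
      exact hε y hy
    · rintro ⟨B, ⟨b, rfl⟩, hyB⟩
      exact hsub b.1 b.2 hyB
  rw [hS]
  exact .sUnion _ (by rintro B ⟨b, rfl⟩; exact .basic _ ⟨b.1, ε b.1 b.2, hε b.1 b.2, rfl⟩)

lemma dPsi_pos (hw : ∀ a b : T, IsGLB {a, b} (wedge a b)) (Ψ : T → ENNReal)
    (hΨ1 : ∀ t, 1 ≤ Ψ t) (hΨmono : Monotone Ψ) (hΨstrict : ∀ a b : T, a < b → Ψ a < Ψ b)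
    {σ α : T} (h : α ≠ σ) : 0 < dPsi wedge Ψ σ α := by
  have hw1 : wedge σ α ≤ σ := wedge_le_left hw σ α
  have hw2 : wedge σ α ≤ α := wedge_le_right hw σ α
  rcases eq_or_lt_of_le hw1 with he | hlt
  · have hσα : σ < α := lt_of_le_of_ne (he ▸ hw2) (Ne.symm h)
    have hs := fPsi_strict hΨ1 hΨstrict hσα
    rw [dPsi_eq, he]
    linarith
  · have h1 := fPsi_strict hΨ1 hΨstrict hlt
    have h2 := fPsi_anti hΨ1 hΨmono hw2
    rw [dPsi_eq]
    linarith

end Aux2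

section Aux3

variable {wedge : T → T → T}

lemma tangClass_ball (hw : ∀ a b : T, IsGLB {a, b} (wedge a b))
    (hch : ∀ {c x y : T}, x ≤ c → y ≤ c → x ≤ y ∨ y ≤ x)
    (Ψ : T → ENNReal) (hΨ1 : ∀ t, 1 ≤ Ψ t) (hΨmono : Monotone Ψ)
    (hΨstrict : ∀ a b : T, a < b → Ψ a < Ψ b)
    (hΨsurj : ∀ a b : T, a ≤ b → ∀ c : ENNReal, Ψ a ≤ c → c ≤ Ψ b →
      ∃ t : T, a ≤ t ∧ t ≤ b ∧ Ψ t = c)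
    {τ α : T} (hα : α ≠ τ) :
    ∀ b ∈ tangClass wedge τ α, ∃ ε : ℝ, 0 < ε ∧
      {y | dPsi wedge Ψ b y < ε} ⊆ tangClass wedge τ α := by
  intro b hb
  by_cases hτα : τ ≤ α
  · have hτα' : τ < α := lt_of_le_of_ne hτα (Ne.symm hα)
    have hw1 : τ < wedge α b := (mem_tangClass_of_lt hw hτα').mp hb
    obtain ⟨c, hc1, hc2⟩ := exists_between (hΨstrict τ (wedge α b) hw1)
    obtain ⟨w₁, hw₁1, hw₁2, hw₁3⟩ := hΨsurj τ (wedge α b) hw1.le c hc1.le hc2.le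
    have hτw₁ : τ < w₁ := by
      rcases eq_or_lt_of_le hw₁1 with h | h
      · exfalso; rw [← h] at hw₁3; exact hc1.ne hw₁3
      · exact h
    have hw₁w : w₁ < wedge α b := by
      rcases eq_or_lt_of_le hw₁2 with h | h
      · exfalso; rw [h] at hw₁3; exact hc2.ne' hw₁3
      · exact h
    have hw₁b : w₁ < b := lt_of_lt_of_le hw₁w (wedge_le_right hw α b)
    refine ⟨fPsi Ψ w₁ - fPsi Ψ b, sub_pos.mpr (fPsi_strict hΨ1 hΨstrict hw₁b), ?_⟩
    intro b' hb'
    simp only [Set.mem_setOf_eq] at hb'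
    rw [mem_tangClass_of_lt hw hτα']
    have hvb : wedge b b' ≤ b := wedge_le_left hw b b'
    rcases hch hw₁b.le hvb with h | h
    · exact lt_of_lt_of_le hτw₁ (le_wedge hw (hw₁2.trans (wedge_le_left hw α b))
        (h.trans (wedge_le_right hw b b')))
    · rcases eq_or_lt_of_le h with heq | hlt
      · exact lt_of_lt_of_le hτw₁ (le_wedge hw (hw₁2.trans (wedge_le_left hw α b))
          (heq.symm ▸ (wedge_le_right hw b b')))
      · exfalso
        have h1 : fPsi Ψ w₁ < fPsi Ψ (wedge b b') := fPsi_strict hΨ1 hΨstrict hlt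
        have h2 : fPsi Ψ b' ≤ fPsi Ψ (wedge b b') :=
          fPsi_anti hΨ1 hΨmono (wedge_le_right hw b b')
        have h3 : fPsi Ψ b ≤ fPsi Ψ (wedge b b') := fPsi_anti hΨ1 hΨmono hvb
        rw [dPsi_eq] at hb'
        linarith only [hb', h1, h2, h3]
  · have hτb : ¬ τ ≤ b := (mem_tangClass_of_not_le hw hch hτα).mp hb
    by_cases hbτ : b ≤ τ
    · have hbτ' : b < τ := lt_of_le_of_ne hbτ (fun hh => hτb (hh ▸ le_rfl))
      refine ⟨fPsi Ψ b - fPsi Ψ τ, sub_pos.mpr (fPsi_strict hΨ1 hΨstrict hbτ'), ?_⟩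
      intro b' hb'
      simp only [Set.mem_setOf_eq] at hb'
      rw [mem_tangClass_of_not_le hw hch hτα]
      intro hτb'
      have h1 : fPsi Ψ b ≤ fPsi Ψ (wedge b b') := fPsi_anti hΨ1 hΨmono (wedge_le_left hw b b')
      have h2 : fPsi Ψ b' ≤ fPsi Ψ τ := fPsi_anti hΨ1 hΨmono hτb'
      rw [dPsi_eq] at hb'
      linarith only [hb', h1, h2]
    · have hm : wedge τ b < b :=
        lt_of_le_of_ne (wedge_le_right hw τ b) (fun hh => hbτ (hh ▸ wedge_le_left hw τ b))
      refine ⟨fPsi Ψ (wedge τ b) - fPsi Ψ b, sub_pos.mpr (fPsi_strict hΨ1 hΨstrict hm), ?_⟩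
      intro b' hb'
      simp only [Set.mem_setOf_eq] at hb'
      rw [mem_tangClass_of_not_le hw hch hτα]
      intro hτb'
      have hvb' : wedge b b' ≤ b' := wedge_le_right hw b b'
      rcases hch hτb' hvb' with h | h
      · exact hτb (h.trans (wedge_le_left hw b b'))
      · have hvm : wedge b b' ≤ wedge τ b := le_wedge hw h (wedge_le_left hw b b')
        have h1 : fPsi Ψ (wedge τ b) ≤ fPsi Ψ (wedge b b') := fPsi_anti hΨ1 hΨmono hvm
        have h2 : fPsi Ψ b' ≤ fPsi Ψ (wedge b b') := fPsi_anti hΨ1 hΨmono hvb'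
        rw [dPsi_eq] at hb'
        linarith only [hb', h1, h2]
end Aux3

/-- in a rooted non-metric tree with a point having uncountably
many branches, the weak tree topology is strictly coarser than the metric
topology induced by any parametrization `Ψ : T → [1,∞]`. -/
theorem weakTreeTopology_strictly_coarser
    -- (T1): a root
    (τ₀ : T) (hroot : ∀ t : T, τ₀ ≤ t)
    -- (T2): down-sets are order-isomorphic to real intervals
    (hI : ∀ τ : T, ∃ s : Set ℝ, s.OrdConnected ∧
      Nonempty ({σ : T // σ ≤ τ} ≃o s))
    -- (T3): totally ordered convex subsets are order-isomorphic to real intervals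
    (hT3 : ∀ C : Set T, IsChain (· ≤ ·) C → C.OrdConnected →
      ∃ s : Set ℝ, s.OrdConnected ∧ Nonempty (C ≃o s))
    -- (T4'): pairwise infima, realized by `wedge`
    (wedge : T → T → T) (hwedge : ∀ a b : T, IsGLB {a, b} (wedge a b))
    -- `Ψ` is an increasing parametrization with values in `[1,∞]`
    (Ψ : T → ENNReal) (hΨ1 : ∀ t, 1 ≤ Ψ t) (hΨmono : Monotone Ψ)
    (hΨstrict : ∀ a b : T, a < b → Ψ a < Ψ b)
    (hΨsurj : ∀ a b : T, a ≤ b → ∀ c : ENNReal, Ψ a ≤ c → c ≤ Ψ b →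
      ∃ t : T, a ≤ t ∧ t ≤ b ∧ Ψ t = c)
    (σ : T)
    (huncount : ¬ Set.Countable {C : Set T | ∃ α : T, α ≠ σ ∧ C = tangClass wedge σ α}) :
    dPsiTopology wedge Ψ ≤ weakTreeTopology wedge ∧
      dPsiTopology wedge Ψ ≠ weakTreeTopology wedge := by
  have hch : ∀ {c x y : T}, x ≤ c → y ≤ c → x ≤ y ∨ y ≤ x :=
    fun hx hy => below_comp hI hx hy
  constructor
  · rw [weakTreeTopology, TopologicalSpace.le_generateFrom_iff_subset_isOpen]
    rintro U ⟨τ, α, hα, rfl⟩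
    show TopologicalSpace.GenerateOpen _ _
    exact gopen_of_balls hwedge Ψ
      (tangClass_ball hwedge hch Ψ hΨ1 hΨmono hΨstrict hΨsurj hα)
  · intro heq
    apply huncount
    have hfin : ∀ ε : ℝ, 0 < ε → {C : Set T | (∃ β : T, β ≠ σ ∧ C = tangClass wedge σ β) ∧
        ¬ C ⊆ {y | dPsi wedge Ψ σ y < ε}}.Finite := by
      intro ε hε
      refine weak_nbhd_cofinite hwedge hch σ ?_ ?_
      · have h1 : (dPsiTopology wedge Ψ).IsOpen {y | dPsi wedge Ψ σ y < ε} :=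
          TopologicalSpace.GenerateOpen.basic _ ⟨σ, ε, hε, rfl⟩
        rw [heq] at h1
        exact h1
      · show dPsi wedge Ψ σ σ < ε
        rw [dPsi_self hwedge Ψ σ]
        exact hε
    have hsub : {C : Set T | ∃ α : T, α ≠ σ ∧ C = tangClass wedge σ α} ⊆
        ⋃ n : ℕ, {C : Set T | (∃ β : T, β ≠ σ ∧ C = tangClass wedge σ β) ∧
          ¬ C ⊆ {y | dPsi wedge Ψ σ y < 1 / ((n : ℝ) + 1)}} := by
      rintro C ⟨α, hα, rfl⟩
      have hpos := dPsi_pos hwedge Ψ hΨ1 hΨmono hΨstrict hα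
      obtain ⟨n, hn⟩ := exists_nat_one_div_lt hpos
      refine Set.mem_iUnion.mpr ⟨n, ⟨α, hα, rfl⟩, fun hsub' => ?_⟩
      have hmem := hsub' (self_mem_tangClass hwedge hα)
      simp only [Set.mem_setOf_eq] at hmem
      linarith only [hn, hmem]
    exact Set.Countable.mono hsub
      (Set.countable_iUnion (fun n => (hfin _ (by positivity)).countable))
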